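/- Let A, B be self-adjoint operators on a Hilbert space with A ≥ 0 invertible and ‖A^{-1}B‖ < 1 (operator norm). Then (1 − ‖A^{-1}B‖)² ⟨A²f, f⟩ ≤ ⟨|A+B|² f, f⟩ ≤ (1 + ‖A^{-1}B‖)² ⟨A²f, f⟩ for all f, and consequently, by operator monotonicity of the square root, (1 − ‖A^{-1}B‖) A ≤ |A+B| ≤ (1 + ‖A^{-1}B‖) A. -/

import Mathlib

open MeasureTheory ContinuousLinearMap

noncomputable section

open scoped NNReal

/-- In a unital C⋆-algebra: if `0 ≤ a`, `0 ≤ b`, `b` invertible and `a * a ≤ b * b`,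
then `a ≤ b`. -/
lemma my_sq_le_sq_imp_le {𝔸 : Type*} [CStarAlgebra 𝔸] [PartialOrder 𝔸] [StarOrderedRing 𝔸]
    {a b : 𝔸} (ha : 0 ≤ a) (hbu : IsUnit b) (hb : 0 ≤ b) (h : a * a ≤ b * b) : a ≤ b := by
  lift b to 𝔸ˣ using hbu
  have hbinv : ((b : 𝔸) ^ (-1 : ℝ)) = (↑b⁻¹ : 𝔸) := CFC.rpow_neg_one_eq_inv b hb
  have hbinv_nonneg : (0 : 𝔸) ≤ (b : 𝔸) ^ (-1 : ℝ) := CFC.rpow_nonneg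
  have hhalf_nonneg : (0 : 𝔸) ≤ (b : 𝔸) ^ (-(1/2) : ℝ) := CFC.rpow_nonneg
  have haa : (0 : 𝔸) ≤ a * a := by
    have := star_mul_self_nonneg a
    rwa [(IsSelfAdjoint.of_nonneg ha).star_eq] at this
  -- key : ‖a * b⁻¹‖ ≤ 1
  have key : ‖a * (b : 𝔸) ^ (-1 : ℝ)‖ ≤ 1 := by
    rw [← sq_le_one_iff₀ (norm_nonneg _), sq, ← CStarRing.norm_star_mul_self]
    have heq : star (a * (b : 𝔸) ^ (-1 : ℝ)) * (a * (b : 𝔸) ^ (-1 : ℝ))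
        = (b : 𝔸) ^ (-1 : ℝ) * (a * a) * ((b : 𝔸) ^ (-1 : ℝ)) := by
      rw [star_mul, (IsSelfAdjoint.of_nonneg ha).star_eq,
        (IsSelfAdjoint.of_nonneg hbinv_nonneg).star_eq]
      noncomm_ring
    rw [heq, CStarAlgebra.norm_le_one_iff_of_nonneg _
      (conjugate_nonneg_of_nonneg haa hbinv_nonneg)]
    have h1 : (b : 𝔸) ^ (-1 : ℝ) * (a * a) * ((b : 𝔸) ^ (-1 : ℝ))
        ≤ (b : 𝔸) ^ (-1 : ℝ) * ((b : 𝔸) * (b : 𝔸)) * ((b : 𝔸) ^ (-1 : ℝ)) := by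
      have := star_left_conjugate_le_conjugate h ((b : 𝔸) ^ (-1 : ℝ))
      rwa [(IsSelfAdjoint.of_nonneg hbinv_nonneg).star_eq] at this
    have h2 : (b : 𝔸) ^ (-1 : ℝ) * ((b : 𝔸) * (b : 𝔸)) * ((b : 𝔸) ^ (-1 : ℝ)) = 1 := by
      rw [hbinv]
      calc (↑b⁻¹ : 𝔸) * ((b : 𝔸) * (b : 𝔸)) * (↑b⁻¹ : 𝔸)
          = ((↑b⁻¹ : 𝔸) * (b : 𝔸)) * ((b : 𝔸) * (↑b⁻¹ : 𝔸)) := by noncomm_ring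
        _ = 1 := by simp
    exact h1.trans h2.le
  rw [le_iff_norm_sqrt_mul_rpow a (b : 𝔸) ha (b.isUnit.isStrictlyPositive hb),
    ← sq_le_one_iff₀ (norm_nonneg _), sq, ← CStarRing.norm_star_mul_self]
  have heq2 : star (CFC.sqrt a * (b : 𝔸) ^ (-(1/2) : ℝ)) * (CFC.sqrt a * (b : 𝔸) ^ (-(1/2) : ℝ))
      = (b : 𝔸) ^ (-(1/2) : ℝ) * a * ((b : 𝔸) ^ (-(1/2) : ℝ)) := by
    rw [star_mul, (IsSelfAdjoint.of_nonneg (CFC.sqrt_nonneg a)).star_eq,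
      (IsSelfAdjoint.of_nonneg hhalf_nonneg).star_eq, mul_assoc, ← mul_assoc (CFC.sqrt a),
      CFC.sqrt_mul_sqrt_self a ha, ← mul_assoc]
  rw [heq2]
  set x : 𝔸 := (b : 𝔸) ^ (-(1/2) : ℝ) * a * ((b : 𝔸) ^ (-(1/2) : ℝ)) with hxdef
  have hx : (0 : 𝔸) ≤ x := conjugate_nonneg_of_nonneg ha hhalf_nonneg
  rcases subsingleton_or_nontrivial 𝔸 with hsub | hnt
  · simp [Subsingleton.elim x 0]
  have hmem : ‖x‖ ∈ spectrum ℝ x := CStarAlgebra.norm_mem_spectrum_of_nonneg hx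
  rcases eq_or_ne ‖x‖ 0 with h0 | h0
  · rw [h0]; norm_num
  have hswap : spectrum ℝ ((b : 𝔸) ^ (-(1/2) : ℝ) * (a * (b : 𝔸) ^ (-(1/2) : ℝ))) \ {0}
      = spectrum ℝ ((a * (b : 𝔸) ^ (-(1/2) : ℝ)) * (b : 𝔸) ^ (-(1/2) : ℝ)) \ {0} :=
    spectrum.nonzero_mul_comm _ _
  have hx2 : ‖x‖ ∈ spectrum ℝ ((a * (b : 𝔸) ^ (-(1/2) : ℝ)) * (b : 𝔸) ^ (-(1/2) : ℝ)) := by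
    have hmem' : ‖x‖ ∈ spectrum ℝ ((b : 𝔸) ^ (-(1/2) : ℝ) * (a * (b : 𝔸) ^ (-(1/2) : ℝ))) \ {0} := by
      refine ⟨?_, h0⟩
      rw [← mul_assoc]
      exact hmem
    exact (hswap ▸ hmem').1
  have hx3 : ‖x‖ ∈ spectrum ℝ (a * (b : 𝔸) ^ (-1 : ℝ)) := by
    have : (a * (b : 𝔸) ^ (-(1/2) : ℝ)) * (b : 𝔸) ^ (-(1/2) : ℝ) = a * (b : 𝔸) ^ (-1 : ℝ) := by
      rw [mul_assoc, ← CFC.rpow_add b.isUnit]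
      norm_num
    rwa [this] at hx2
  have := spectrum.norm_le_norm_of_mem hx3
  rw [Real.norm_eq_abs, abs_of_nonneg (norm_nonneg x)] at this
  exact this.trans key

/-- A nonnegative real multiple of a positive operator is positive. -/
lemma my_smul_isPositive {H : Type*} [NormedAddCommGroup H] [InnerProductSpace ℂ H]
    [CompleteSpace H] {A : H →L[ℂ] H} (hA : A.IsPositive) {r : ℝ} (hr : 0 ≤ r) :
    (((r : ℝ) : ℂ) • A).IsPositive := by
  constructor
  · rw [← ContinuousLinearMap.isSelfAdjoint_iff_isSymmetric, IsSelfAdjoint, star_smul, hA.isSelfAdjoint.star_eq, Complex.star_def,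
      Complex.conj_ofReal]
  · intro x
    rw [ContinuousLinearMap.reApplyInnerSelf_apply, ContinuousLinearMap.smul_apply,
      inner_smul_left, Complex.conj_ofReal]
    rw [show (RCLike.re : ℂ →+ ℝ) = Complex.reAddGroupHom from rfl]
    simp only [Complex.reAddGroupHom, AddMonoidHom.coe_mk, ZeroHom.coe_mk, Complex.re_ofReal_mul]
    exact mul_nonneg hr (hA.re_inner_nonneg_left x)

/-- Let `A, B` be self-adjoint operators on a complex Hilbert space with `A ≥ 0` invertible
(with inverse `A'`) and `c := ‖A⁻¹B‖ < 1`.  Then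
`(1 − c)² ⟨A²f, f⟩ ≤ ⟨|A+B|² f, f⟩ ≤ (1 + c)² ⟨A²f, f⟩` for all `f` (where
`|A+B|² = (A+B)*(A+B)`), and consequently, by operator monotonicity of the square root,
`(1 − c) A ≤ |A+B| ≤ (1 + c) A`, where `|A+B|` is the positive operator `S` with
`S² = (A+B)*(A+B)`. -/
theorem statement15 {H : Type*} [NormedAddCommGroup H] [InnerProductSpace ℂ H]
    [CompleteSpace H] (A B A' S : H →L[ℂ] H)
    (hA : A.IsPositive) (hB : IsSelfAdjoint B)
    (hA'1 : A * A' = 1) (hA'2 : A' * A = 1)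
    (hc : ‖A' * B‖ < 1)
    (hS : S.IsPositive) (hSsq : S * S = star (A + B) * (A + B)) :
    (∀ f : H,
      (1 - ‖A' * B‖) ^ 2 * ((inner ℂ ((A * A) f) f : ℂ)).re
          ≤ ((inner ℂ ((star (A + B) * (A + B)) f) f : ℂ)).re ∧
      ((inner ℂ ((star (A + B) * (A + B)) f) f : ℂ)).re
          ≤ (1 + ‖A' * B‖) ^ 2 * ((inner ℂ ((A * A) f) f : ℂ)).re) ∧
    (S - ((1 - ‖A' * B‖ : ℝ) : ℂ) • A).IsPositive ∧
    (((1 + ‖A' * B‖ : ℝ) : ℂ) • A - S).IsPositive := by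
  have hc0 : (0 : ℝ) ≤ ‖A' * B‖ := norm_nonneg _
  set c : ℝ := ‖A' * B‖ with hcdef
  have hAsa : IsSelfAdjoint A := hA.isSelfAdjoint
  have hA'sa : star A' = A' := by
    have h1 : star A' * A = 1 := by
      have := congrArg star hA'1
      rwa [star_mul, hAsa.star_eq, star_one] at this
    calc star A' = star A' * (A * A') := by rw [hA'1, mul_one]
      _ = (star A' * A) * A' := by rw [mul_assoc]
      _ = A' := by rw [h1, one_mul]
  have hBA'norm : ‖B * A'‖ = c := by
    rw [hcdef, ← norm_star (A' * B), star_mul, hA'sa, hB.star_eq]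
  have happly : ∀ f : H, (A + B) f = A f + (B * A') (A f) := by
    intro f
    have h1 : A' (A f) = f := by
      rw [← ContinuousLinearMap.mul_apply, hA'2, ContinuousLinearMap.one_apply]
    rw [ContinuousLinearMap.add_apply, ContinuousLinearMap.mul_apply, h1]
  have hBA'le : ∀ f : H, ‖(B * A') (A f)‖ ≤ c * ‖A f‖ := by
    intro f
    simpa [hBA'norm] using (B * A').le_opNorm (A f)
  have hub : ∀ f : H, ‖(A + B) f‖ ≤ (1 + c) * ‖A f‖ := by
    intro f
    rw [happly f]
    have := norm_add_le (A f) ((B * A') (A f))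
    have h2 := hBA'le f
    nlinarith
  have hlb : ∀ f : H, (1 - c) * ‖A f‖ ≤ ‖(A + B) f‖ := by
    intro f
    rw [happly f]
    have h4 : ‖A f‖ - ‖(B * A') (A f)‖ ≤ ‖A f + (B * A') (A f)‖ := by
      simpa [sub_neg_eq_add] using norm_sub_norm_le (A f) (-((B * A') (A f)))
    have h2 := hBA'le f
    nlinarith
  have hinner : ∀ (T : H →L[ℂ] H) (f : H),
      ((inner ℂ ((star T * T) f) f : ℂ)).re = ‖T f‖ ^ 2 := by
    intro T f
    rw [ContinuousLinearMap.mul_apply, ContinuousLinearMap.star_eq_adjoint,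
      ContinuousLinearMap.adjoint_inner_left, inner_self_eq_norm_sq_to_K]
    norm_cast
  have hinnerA : ∀ f : H, ((inner ℂ ((A * A) f) f : ℂ)).re = ‖A f‖ ^ 2 := by
    intro f
    have := hinner A f
    rwa [hAsa.star_eq] at this
  have part1 : ∀ f : H,
      (1 - c) ^ 2 * ((inner ℂ ((A * A) f) f : ℂ)).re
          ≤ ((inner ℂ ((star (A + B) * (A + B)) f) f : ℂ)).re ∧
      ((inner ℂ ((star (A + B) * (A + B)) f) f : ℂ)).re
          ≤ (1 + c) ^ 2 * ((inner ℂ ((A * A) f) f : ℂ)).re := by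
    intro f
    rw [hinner (A + B) f, hinnerA f]
    constructor
    · have h1 := hlb f
      have ht : 0 ≤ (1 - c) * ‖A f‖ := mul_nonneg (by linarith) (norm_nonneg _)
      nlinarith
    · have h1 := hub f
      have ht : 0 ≤ ‖(A + B) f‖ := norm_nonneg _
      nlinarith
  -- invertibility
  have hAunit : IsUnit A := ⟨⟨A, A', hA'1, hA'2⟩, rfl⟩
  have hCunit : IsUnit (1 + A' * B) := by
    have hu := (Units.oneSub (-(A' * B)) (by rwa [norm_neg])).isUnit
    simpa [Units.oneSub, sub_neg_eq_add] using hu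
  have hABfact : A * (1 + A' * B) = A + B := by
    rw [mul_add, mul_one, ← mul_assoc, hA'1, one_mul]
  have hABunit : IsUnit (A + B) := hABfact ▸ hAunit.mul hCunit
  have hSSunit : IsUnit (S * S) := by rw [hSsq]; exact hABunit.star.mul hABunit
  have hSunit : IsUnit S := by
    obtain ⟨u, hu⟩ := hSSunit
    have hcomm : Commute S ↑u := by rw [hu]; exact (Commute.refl S).mul_right (Commute.refl S)
    have hcomm' := hcomm.units_inv_right
    refine ⟨⟨S, ↑u⁻¹ * S, ?_, ?_⟩, rfl⟩
    · calc S * (↑u⁻¹ * S) = (S * ↑u⁻¹) * S := by rw [mul_assoc]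
        _ = (↑u⁻¹ * S) * S := by rw [hcomm'.eq]
        _ = ↑u⁻¹ * (S * S) := by rw [mul_assoc]
        _ = 1 := by rw [← hu, u.inv_mul]
    · calc (↑u⁻¹ * S) * S = ↑u⁻¹ * (S * S) := by rw [mul_assoc]
        _ = 1 := by rw [← hu, u.inv_mul]
  have hSpos : (0 : H →L[ℂ] H) ≤ S := (ContinuousLinearMap.nonneg_iff_isPositive S).mpr hS
  -- squares of the scalar multiples
  have hsmulsq : ∀ r : ℝ, (((r : ℝ) : ℂ) • A) * (((r : ℝ) : ℂ) • A)
      = ((r ^ 2 : ℝ) : ℂ) • (A * A) := by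
    intro r
    rw [smul_mul_assoc, mul_smul_comm, smul_smul]
    norm_num
    ring_nf
  have hreapply : ∀ (r : ℝ) (T : H →L[ℂ] H) (x : H),
      ((inner ℂ ((((r : ℝ) : ℂ) • T) x) x : ℂ)).re = r * ((inner ℂ (T x) x : ℂ)).re := by
    intro r T x
    rw [ContinuousLinearMap.smul_apply, inner_smul_left, Complex.conj_ofReal,
      Complex.re_ofReal_mul]
  -- the comparison of squares, as operator inequalities
  have hsq₁ : (((1 - c : ℝ) : ℂ) • A) * (((1 - c : ℝ) : ℂ) • A) ≤ S * S := by
    rw [hsmulsq, ContinuousLinearMap.le_def, hSsq]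
    constructor
    · have hsa1 : IsSelfAdjoint (star (A + B) * (A + B)) := IsSelfAdjoint.star_mul_self (A + B)
      have hAA : IsSelfAdjoint (A * A) := by
        have := IsSelfAdjoint.star_mul_self A
        rwa [hAsa.star_eq] at this
      have hsa2 : IsSelfAdjoint ((((1 - c) ^ 2 : ℝ) : ℂ) • (A * A)) := by
        rw [IsSelfAdjoint, star_smul, hAA.star_eq, Complex.star_def, Complex.conj_ofReal]
      exact ContinuousLinearMap.isSelfAdjoint_iff_isSymmetric.mp (hsa1.sub hsa2)
    · intro x
      rw [ContinuousLinearMap.reApplyInnerSelf_apply, ContinuousLinearMap.sub_apply,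
        inner_sub_left]
      have hre : ∀ z w : ℂ, (z - w).re = z.re - w.re := fun z w => Complex.sub_re z w
      rw [show (RCLike.re : ℂ →+ ℝ) = Complex.reAddGroupHom from rfl]
      simp only [Complex.reAddGroupHom, AddMonoidHom.coe_mk, ZeroHom.coe_mk, Complex.sub_re]
      have := (part1 x).1
      have h2 := hreapply ((1 - c) ^ 2) (A * A) x
      rw [h2]
      linarith
  have hsq₂ : S * S ≤ (((1 + c : ℝ) : ℂ) • A) * (((1 + c : ℝ) : ℂ) • A) := by
    rw [hsmulsq, ContinuousLinearMap.le_def, hSsq]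
    constructor
    · have hsa1 : IsSelfAdjoint (star (A + B) * (A + B)) := IsSelfAdjoint.star_mul_self (A + B)
      have hAA : IsSelfAdjoint (A * A) := by
        have := IsSelfAdjoint.star_mul_self A
        rwa [hAsa.star_eq] at this
      have hsa2 : IsSelfAdjoint ((((1 + c) ^ 2 : ℝ) : ℂ) • (A * A)) := by
        rw [IsSelfAdjoint, star_smul, hAA.star_eq, Complex.star_def, Complex.conj_ofReal]
      exact ContinuousLinearMap.isSelfAdjoint_iff_isSymmetric.mp (hsa2.sub hsa1)
    · intro x
      rw [ContinuousLinearMap.reApplyInnerSelf_apply, ContinuousLinearMap.sub_apply,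
        inner_sub_left]
      rw [show (RCLike.re : ℂ →+ ℝ) = Complex.reAddGroupHom from rfl]
      simp only [Complex.reAddGroupHom, AddMonoidHom.coe_mk, ZeroHom.coe_mk, Complex.sub_re]
      have := (part1 x).2
      have h2 := hreapply ((1 + c) ^ 2) (A * A) x
      rw [h2]
      linarith
  -- positivity of the scalar multiples
  have ha₁pos : ((((1 - c : ℝ)) : ℂ) • A).IsPositive := my_smul_isPositive hA (by linarith)
  have ha₂pos : ((((1 + c : ℝ)) : ℂ) • A).IsPositive := my_smul_isPositive hA (by linarith)
  have ha₁ : (0 : H →L[ℂ] H) ≤ ((1 - c : ℝ) : ℂ) • A :=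
    (ContinuousLinearMap.nonneg_iff_isPositive _).mpr ha₁pos
  have ha₂ : (0 : H →L[ℂ] H) ≤ ((1 + c : ℝ) : ℂ) • A :=
    (ContinuousLinearMap.nonneg_iff_isPositive _).mpr ha₂pos
  have ha₂unit : IsUnit (((1 + c : ℝ) : ℂ) • A) := by
    have hne : ((1 + c : ℝ) : ℂ) ≠ 0 := by
      rw [Ne, Complex.ofReal_eq_zero]
      linarith
    refine ⟨⟨((1 + c : ℝ) : ℂ) • A, (((1 + c : ℝ) : ℂ))⁻¹ • A', ?_, ?_⟩, rfl⟩
    · rw [smul_mul_assoc, mul_smul_comm, smul_smul, mul_inv_cancel₀ hne, one_smul, hA'1]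
    · rw [smul_mul_assoc, mul_smul_comm, smul_smul, inv_mul_cancel₀ hne, one_smul, hA'2]
  have h₁le : ((1 - c : ℝ) : ℂ) • A ≤ S := my_sq_le_sq_imp_le ha₁ hSunit hSpos hsq₁
  have h₂le : S ≤ ((1 + c : ℝ) : ℂ) • A := my_sq_le_sq_imp_le hSpos ha₂unit ha₂ hsq₂
  exact ⟨part1, (ContinuousLinearMap.le_def _ _).mp h₁le, (ContinuousLinearMap.le_def _ _).mp h₂le⟩

end
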